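/- For any log-concave integrable function f : R^n → [0,∞) with difference function Δf(z) = sup{√(f(x)f(-y)) : x + y = 2z}, one has ∫_{R^n} Δf(z) dz ≤ 2^n ∫_{R^n} f(x) dx. -/

import Mathlib

open MeasureTheory Set Pointwise

open scoped ENNReal

theorem colesanti_difference_function (n : ℕ)
    (f : EuclideanSpace ℝ (Fin n) → ℝ)
    (hf0 : ∀ x, 0 ≤ f x)
    (hf : ∀ x y : EuclideanSpace ℝ (Fin n), ∀ l : ℝ, 0 ≤ l → l ≤ 1 →
      f (l • x + (1 - l) • y) ≥ f x ^ l * f y ^ (1 - l))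
    (hfi : Integrable f) :
    (∫ z, ⨆ x, Real.sqrt (f x * f (x - (2 : ℝ) • z))) ≤ 2 ^ n * ∫ x, f x := by
  classical
  set D : EuclideanSpace ℝ (Fin n) → ℝ :=
    fun z => ⨆ x, Real.sqrt (f x * f (x - (2 : ℝ) • z)) with hD
  have hDnonneg : ∀ z, 0 ≤ D z := fun z => Real.iSup_nonneg fun x => Real.sqrt_nonneg _
  have hc0 : 0 ≤ ∫ x, f x := integral_nonneg hf0
  set G : EuclideanSpace ℝ (Fin n) → ℝ≥0∞ := fun x => ENNReal.ofReal (f x) with hG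
  have hGmeas : AEMeasurable G volume := hfi.aemeasurable.ennreal_ofReal
  have hLdef : ENNReal.ofReal (∫ x, f x) = ∫⁻ x, G x :=
    ofReal_integral_eq_lintegral_ofReal hfi (Filter.Eventually.of_forall hf0)
  set L : ℝ≥0∞ := ∫⁻ x, G x with hL
  have hLne : L ≠ ⊤ := by rw [← hLdef]; exact ENNReal.ofReal_ne_top
  by_cases hczero : (∫ x, f x) = 0
  · -- degenerate case : f = 0 a.e.
    have hGae : ∀ᵐ x ∂(volume : Measure (EuclideanSpace ℝ (Fin n))), G x = 0 := by
      have h0 : L = 0 := by rw [← hLdef, hczero, ENNReal.ofReal_zero]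
      have := (lintegral_eq_zero_iff' hGmeas).mp h0
      exact this.mono fun x hx => by simpa using hx
    have hCnull : volume {x : EuclideanSpace ℝ (Fin n) | 0 < f x} = 0 := by
      have h2 : volume {x : EuclideanSpace ℝ (Fin n) | ¬ G x = 0} = 0 := ae_iff.mp hGae
      refine measure_mono_null ?_ h2
      intro x hx
      simp only [mem_setOf_eq] at hx ⊢
      rw [hG]
      exact (ENNReal.ofReal_pos.mpr hx).ne'
    have hCconv : Convex ℝ {x : EuclideanSpace ℝ (Fin n) | 0 < f x} := by
      intro x hx y hy a b ha hb hab
      simp only [mem_setOf_eq] at hx hy ⊢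
      have hb' : b = 1 - a := by linarith
      have h := hf x y a ha (by linarith)
      have hpos : 0 < f x ^ a * f y ^ (1 - a) :=
        mul_pos (Real.rpow_pos_of_pos hx _) (Real.rpow_pos_of_pos hy _)
      have h2 : 0 < f (a • x + (1 - a) • y) := lt_of_lt_of_le hpos h
      rw [hb']
      exact h2
    have hRHS : (0:ℝ) ≤ 2 ^ n * ∫ x, f x := mul_nonneg (by positivity) hc0
    by_cases hCne : {x : EuclideanSpace ℝ (Fin n) | 0 < f x}.Nonempty
    · obtain ⟨p, hp⟩ := hCne
      have hspan : affineSpan ℝ {x : EuclideanSpace ℝ (Fin n) | 0 < f x} ≠ ⊤ := by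
        intro htop
        have hint : (interior {x : EuclideanSpace ℝ (Fin n) | 0 < f x}).Nonempty :=
          (hCconv.interior_nonempty_iff_affineSpan_eq_top).mpr htop
        have hpos : 0 < volume {x : EuclideanSpace ℝ (Fin n) | 0 < f x} :=
          lt_of_lt_of_le (isOpen_interior.measure_pos volume hint)
            (measure_mono interior_subset)
        exact hpos.ne' hCnull
      have hdirne : (affineSpan ℝ {x : EuclideanSpace ℝ (Fin n) | 0 < f x}).direction ≠ ⊤ := by
        intro htop
        apply hspan
        have hne : (affineSpan ℝ {x : EuclideanSpace ℝ (Fin n) | 0 < f x} :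
            Set (EuclideanSpace ℝ (Fin n))).Nonempty :=
          ⟨p, subset_affineSpan ℝ _ hp⟩
        exact (AffineSubspace.direction_eq_top_iff_of_nonempty hne).mp htop
      have hSnull : volume
          (((affineSpan ℝ {x : EuclideanSpace ℝ (Fin n) | 0 < f x}).direction : Submodule ℝ _) :
            Set (EuclideanSpace ℝ (Fin n))) = 0 :=
        Measure.addHaar_submodule volume _ hdirne
      have hDz : ∀ z : EuclideanSpace ℝ (Fin n),
          z ∉ (((affineSpan ℝ {x : EuclideanSpace ℝ (Fin n) | 0 < f x}).direction :
            Submodule ℝ _) : Set (EuclideanSpace ℝ (Fin n))) → D z = 0 := by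
        intro z hz
        have hterm : ∀ x, Real.sqrt (f x * f (x - (2:ℝ) • z)) = 0 := by
          intro x
          rcases eq_or_lt_of_le (hf0 x) with h1 | h1
          · rw [← h1, zero_mul, Real.sqrt_zero]
          rcases eq_or_lt_of_le (hf0 (x - (2:ℝ) • z)) with h2 | h2
          · rw [← h2, mul_zero, Real.sqrt_zero]
          exfalso
          apply hz
          have hx : x ∈ {x : EuclideanSpace ℝ (Fin n) | 0 < f x} := h1
          have hy : x - (2:ℝ) • z ∈ {x : EuclideanSpace ℝ (Fin n) | 0 < f x} := h2
          have hsub : x -ᵥ (x - (2:ℝ) • z) ∈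
              (affineSpan ℝ {x : EuclideanSpace ℝ (Fin n) | 0 < f x}).direction :=
            AffineSubspace.vsub_mem_direction (subset_affineSpan ℝ _ hx)
              (subset_affineSpan ℝ _ hy)
          have h2z : (2:ℝ) • z ∈
              (affineSpan ℝ {x : EuclideanSpace ℝ (Fin n) | 0 < f x}).direction := by
            simpa [vsub_eq_sub] using hsub
          have hzz := Submodule.smul_mem _ (2⁻¹:ℝ) h2z
          rw [smul_smul] at hzz
          norm_num at hzz
          exact hzz
        have : D z = ⨆ _ : EuclideanSpace ℝ (Fin n), (0:ℝ) := by
          rw [hD]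
          exact iSup_congr hterm
        rw [this, ciSup_const]
      have hDae : D =ᵐ[volume] (fun _ => (0:ℝ)) := by
        refine (ae_iff).mpr ?_
        refine measure_mono_null ?_ hSnull
        intro z hz
        simp only [mem_setOf_eq] at hz
        by_contra hzmem
        exact hz (hDz z hzmem)
      rw [integral_congr_ae hDae, integral_zero]
      exact hRHS
    · -- f is identically zero
      have hzero : ∀ x, f x = 0 := by
        intro x
        rcases eq_or_lt_of_le (hf0 x) with h | h
        · exact h.symm
        · exact absurd ⟨x, h⟩ hCne
      have hDall : ∀ z, D z = 0 := by
        intro z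
        have hterm : ∀ x, Real.sqrt (f x * f (x - (2:ℝ) • z)) = 0 := by
          intro x; rw [hzero x, zero_mul, Real.sqrt_zero]
        have : D z = ⨆ _ : EuclideanSpace ℝ (Fin n), (0:ℝ) := by
          rw [hD]; exact iSup_congr hterm
        rw [this, ciSup_const]
      have hDae : D =ᵐ[volume] (fun _ => (0:ℝ)) := Filter.Eventually.of_forall hDall
      rw [integral_congr_ae hDae, integral_zero]
      exact hRHS
  · -- main case
    have hcpos : 0 < ∫ x, f x := lt_of_le_of_ne hc0 (Ne.symm hczero)
    have hLne0 : L ≠ 0 := by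
      rw [← hLdef]
      exact (ENNReal.ofReal_pos.mpr hcpos).ne'
    set P : EuclideanSpace ℝ (Fin n) → ℝ≥0∞ := fun z => ∫⁻ x, G x * G (x - z) with hP
    -- the scaling map
    have hconst : ENNReal.ofReal
        |(((2:ℝ)⁻¹) ^ Module.finrank ℝ (EuclideanSpace ℝ (Fin n)))⁻¹| = (2:ℝ≥0∞)^n := by
      rw [finrank_euclideanSpace_fin, ← inv_pow, inv_inv,
        abs_of_nonneg (by positivity : (0:ℝ) ≤ (2:ℝ)^n),
        ENNReal.ofReal_pow (by norm_num : (0:ℝ) ≤ 2)]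
      norm_num
    have hmapT : ∀ x₀ : EuclideanSpace ℝ (Fin n),
        Measure.map (fun y : EuclideanSpace ℝ (Fin n) => (2:ℝ)⁻¹ • x₀ + (2:ℝ)⁻¹ • y) volume
          = ((2:ℝ≥0∞)^n) • volume := by
      intro x₀
      have hsm : Measurable (fun y : EuclideanSpace ℝ (Fin n) => (2:ℝ)⁻¹ • y) := by
        fun_prop
      have had : Measurable (fun u : EuclideanSpace ℝ (Fin n) => (2:ℝ)⁻¹ • x₀ + u) :=
        measurable_id.const_add _
      have h1 : Measure.map (fun y : EuclideanSpace ℝ (Fin n) =>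
            (2:ℝ)⁻¹ • x₀ + (2:ℝ)⁻¹ • y) volume
          = Measure.map (fun u : EuclideanSpace ℝ (Fin n) => (2:ℝ)⁻¹ • x₀ + u)
              (Measure.map (fun y : EuclideanSpace ℝ (Fin n) => (2:ℝ)⁻¹ • y) volume) := by
        rw [Measure.map_map had hsm]
        rfl
      rw [h1, Measure.map_addHaar_smul volume (by norm_num : ((2:ℝ)⁻¹ : ℝ) ≠ 0), hconst,
        Measure.map_smul, map_add_left_eq_self]
    -- the key pointwise inequality
    have key : ∀ z x₀ : EuclideanSpace ℝ (Fin n),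
        ENNReal.ofReal (Real.sqrt (f x₀ * f (x₀ - (2:ℝ) • z))) * L ≤ (2:ℝ≥0∞)^n * P z := by
      intro z x₀
      have ha0 : (0:ℝ) ≤ Real.sqrt (f x₀ * f (x₀ - (2:ℝ) • z)) := Real.sqrt_nonneg _
      have hstep : ∀ y, Real.sqrt (f x₀ * f (x₀ - (2:ℝ) • z)) * f y ≤
          f ((2:ℝ)⁻¹ • x₀ + (2:ℝ)⁻¹ • y) * f (((2:ℝ)⁻¹ • x₀ + (2:ℝ)⁻¹ • y) - z) := by
        intro y
        have hhalf : ((1:ℝ) - 2⁻¹) = 2⁻¹ := by norm_num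
        have h1 := hf x₀ y 2⁻¹ (by norm_num) (by norm_num)
        rw [hhalf] at h1
        have h2 := hf (x₀ - (2:ℝ) • z) y 2⁻¹ (by norm_num) (by norm_num)
        rw [hhalf] at h2
        have e2 : (2:ℝ)⁻¹ • (x₀ - (2:ℝ) • z) + (2:ℝ)⁻¹ • y
            = ((2:ℝ)⁻¹ • x₀ + (2:ℝ)⁻¹ • y) - z := by
          rw [smul_sub, smul_smul]
          norm_num
          abel
        rw [e2] at h2
        have hA : Real.sqrt (f x₀ * f (x₀ - (2:ℝ) • z))
            = f x₀ ^ ((2:ℝ)⁻¹) * f (x₀ - (2:ℝ) • z) ^ ((2:ℝ)⁻¹) := by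
          rw [Real.sqrt_eq_rpow, one_div, Real.mul_rpow (hf0 _) (hf0 _)]
        have hB : f y ^ ((2:ℝ)⁻¹) * f y ^ ((2:ℝ)⁻¹) = f y := by
          rw [← Real.rpow_add' (hf0 y) (by norm_num : ((2:ℝ)⁻¹ + 2⁻¹) ≠ 0)]
          norm_num
        calc Real.sqrt (f x₀ * f (x₀ - (2:ℝ) • z)) * f y
            = (f x₀ ^ ((2:ℝ)⁻¹) * f y ^ ((2:ℝ)⁻¹))
              * (f (x₀ - (2:ℝ) • z) ^ ((2:ℝ)⁻¹) * f y ^ ((2:ℝ)⁻¹)) := by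
              rw [hA]
              conv_lhs => rw [← hB]
              exact mul_mul_mul_comm _ _ _ _
          _ ≤ f ((2:ℝ)⁻¹ • x₀ + (2:ℝ)⁻¹ • y) * f (((2:ℝ)⁻¹ • x₀ + (2:ℝ)⁻¹ • y) - z) := by
              exact mul_le_mul h1 h2
                (mul_nonneg (Real.rpow_nonneg (hf0 _) _) (Real.rpow_nonneg (hf0 _) _)) (hf0 _)
      have hH : AEMeasurable (fun u : EuclideanSpace ℝ (Fin n) => G u * G (u - z)) volume := by
        refine hGmeas.mul ?_
        exact hGmeas.comp_quasiMeasurePreserving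
          (measurePreserving_sub_right volume z).quasiMeasurePreserving
      have hH' : AEMeasurable (fun u : EuclideanSpace ℝ (Fin n) => G u * G (u - z))
          (Measure.map (fun y : EuclideanSpace ℝ (Fin n) =>
            (2:ℝ)⁻¹ • x₀ + (2:ℝ)⁻¹ • y) volume) := by
        rw [hmapT x₀]
        exact (aemeasurable_smul_measure_iff (by positivity)).mpr hH
      have hTmeas : Measurable (fun y : EuclideanSpace ℝ (Fin n) =>
          (2:ℝ)⁻¹ • x₀ + (2:ℝ)⁻¹ • y) := by fun_prop
      calc ENNReal.ofReal (Real.sqrt (f x₀ * f (x₀ - (2:ℝ) • z))) * L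
          = ∫⁻ y, ENNReal.ofReal (Real.sqrt (f x₀ * f (x₀ - (2:ℝ) • z))) * G y :=
            (lintegral_const_mul' _ _ ENNReal.ofReal_ne_top).symm
        _ ≤ ∫⁻ y, G ((2:ℝ)⁻¹ • x₀ + (2:ℝ)⁻¹ • y) * G (((2:ℝ)⁻¹ • x₀ + (2:ℝ)⁻¹ • y) - z) := by
            refine lintegral_mono fun y => ?_
            simp only [hG]
            rw [← ENNReal.ofReal_mul ha0, ← ENNReal.ofReal_mul (hf0 _)]
            exact ENNReal.ofReal_le_ofReal (hstep y)
        _ = ∫⁻ u, G u * G (u - z)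
              ∂(Measure.map (fun y : EuclideanSpace ℝ (Fin n) =>
                (2:ℝ)⁻¹ • x₀ + (2:ℝ)⁻¹ • y) volume) :=
            (lintegral_map' hH' hTmeas.aemeasurable).symm
        _ = (2:ℝ≥0∞)^n * P z := by rw [hmapT x₀, lintegral_smul_measure, smul_eq_mul]
    -- Fubini computation
    have hTon : ∫⁻ z, P z = L * L := by
      have hunc : AEMeasurable (Function.uncurry fun z x => G x * G (x - z))
          ((volume : Measure (EuclideanSpace ℝ (Fin n))).prod volume) := by
        have h1 : AEMeasurable (fun p : EuclideanSpace ℝ (Fin n) × EuclideanSpace ℝ (Fin n)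
            => G p.2) (Measure.prod volume volume) :=
          hGmeas.comp_quasiMeasurePreserving Measure.quasiMeasurePreserving_snd
        have hmp : MeasurePreserving (fun p : EuclideanSpace ℝ (Fin n) × EuclideanSpace ℝ (Fin n)
            => (p.2 - p.1, p.1)) (Measure.prod volume volume) (Measure.prod volume volume) :=
          (measurePreserving_sub_prod volume volume).comp Measure.measurePreserving_swap
        have h2 : AEMeasurable (fun p : EuclideanSpace ℝ (Fin n) × EuclideanSpace ℝ (Fin n)
            => G (p.2 - p.1)) (Measure.prod volume volume) :=
          hGmeas.comp_quasiMeasurePreserving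
            (Measure.quasiMeasurePreserving_fst.comp hmp.quasiMeasurePreserving)
        exact h1.mul h2
      calc ∫⁻ z, P z = ∫⁻ z, ∫⁻ x, G x * G (x - z) := rfl
        _ = ∫⁻ x, ∫⁻ z, G x * G (x - z) := lintegral_lintegral_swap hunc
        _ = ∫⁻ x, G x * ∫⁻ z, G (x - z) := by
            exact lintegral_congr fun x => lintegral_const_mul' _ _ ENNReal.ofReal_ne_top
        _ = ∫⁻ x, G x * L := by
            refine lintegral_congr fun x => ?_
            congr 1
            exact (Measure.measurePreserving_sub_left volume x).lintegral_comp_emb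
              (MeasurableEquiv.subLeft x).measurableEmbedding G
        _ = L * L := lintegral_mul_const' L _ hLne
    -- pointwise bound on the sup
    have hsup : ∀ z, ENNReal.ofReal (D z) * L ≤ (2:ℝ≥0∞)^n * P z := by
      intro z
      by_cases hPtop : P z = ⊤
      · rw [hPtop, ENNReal.mul_top (by positivity : ((2:ℝ≥0∞)^n) ≠ 0)]
        exact le_top
      · have hRtop : (2:ℝ≥0∞)^n * P z / L ≠ ⊤ := by
          refine (ENNReal.div_lt_top ?_ hLne0).ne
          exact ENNReal.mul_ne_top (by simp) hPtop
        have hbound : ∀ x₀ : EuclideanSpace ℝ (Fin n),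
            Real.sqrt (f x₀ * f (x₀ - (2:ℝ) • z)) ≤ ((2:ℝ≥0∞)^n * P z / L).toReal := by
          intro x₀
          have h2 : ENNReal.ofReal (Real.sqrt (f x₀ * f (x₀ - (2:ℝ) • z)))
              ≤ (2:ℝ≥0∞)^n * P z / L :=
            (ENNReal.le_div_iff_mul_le (Or.inl hLne0) (Or.inl hLne)).mpr (key z x₀)
          exact (ENNReal.ofReal_le_iff_le_toReal hRtop).mp h2
        have hDle : D z ≤ ((2:ℝ≥0∞)^n * P z / L).toReal := by
          rw [hD]
          exact ciSup_le hbound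
        have hfin : ENNReal.ofReal (D z) ≤ (2:ℝ≥0∞)^n * P z / L := by
          calc ENNReal.ofReal (D z)
              ≤ ENNReal.ofReal (((2:ℝ≥0∞)^n * P z / L).toReal) :=
                ENNReal.ofReal_le_ofReal hDle
            _ = (2:ℝ≥0∞)^n * P z / L := ENNReal.ofReal_toReal hRtop
        calc ENNReal.ofReal (D z) * L ≤ ((2:ℝ≥0∞)^n * P z / L) * L :=
              mul_le_mul_left hfin L
          _ = (2:ℝ≥0∞)^n * P z := ENNReal.div_mul_cancel hLne0 hLne
    -- integrate the pointwise bound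
    have hfinal : ∫⁻ z, ENNReal.ofReal (D z) ≤ (2:ℝ≥0∞)^n * L := by
      have h1 : (∫⁻ z, ENNReal.ofReal (D z)) * L ≤ ((2:ℝ≥0∞)^n * L) * L := by
        calc (∫⁻ z, ENNReal.ofReal (D z)) * L
            = ∫⁻ z, ENNReal.ofReal (D z) * L := (lintegral_mul_const' L _ hLne).symm
          _ ≤ ∫⁻ z, (2:ℝ≥0∞)^n * P z := lintegral_mono hsup
          _ = (2:ℝ≥0∞)^n * ∫⁻ z, P z := lintegral_const_mul' _ _ (by simp)
          _ = ((2:ℝ≥0∞)^n * L) * L := by rw [hTon]; ring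
      exact (ENNReal.mul_le_mul_iff_left hLne0 hLne).mp h1
    -- conclude
    by_cases hint : Integrable D volume
    · have heq : ∫ z, D z = (∫⁻ z, ENNReal.ofReal (D z)).toReal :=
        integral_eq_lintegral_of_nonneg_ae (Filter.Eventually.of_forall hDnonneg)
          hint.aestronglyMeasurable
      rw [heq]
      have htop : (2:ℝ≥0∞)^n * L ≠ ⊤ := ENNReal.mul_ne_top (by simp) hLne
      refine le_trans (ENNReal.toReal_mono htop hfinal) ?_
      rw [ENNReal.toReal_mul, ← hLdef, ENNReal.toReal_ofReal hc0]
      gcongr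
      simp [ENNReal.toReal_pow]
    · rw [integral_undef hint]
      exact mul_nonneg (by positivity) hc0
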